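/- arXiv:2512.23814 — 2 statements merged into one kernel-verified Lean document; each statement's English description precedes it below -/
import Mathlib

section
/- Let M₁, …, M_Q ∈ Matrix (Fin n) (Fin n) ℂ, θ₁, …, θ_Q ∈ ℝ, and M = Σ_{j=1}^{Q} θ_j M_j. Then for every nonzero v ∈ ℂⁿ, Σ_{1 ≤ j ≤ m ≤ Q} (2 − δ_{j,m})·θ_j·θ_m·(v* ((M_j* M_m)^H) v)/(v* v) ≥ σ_min(M)², where σ_min(M) is the smallest singular value of M. Consequently, for any finite family of nonzero vectors v₁, …, v_k ∈ ℂⁿ, the SCM upper bound σ_min^UB² = min_{ℓ∈[k]} Σ_{j ≤ m} (2 − δ_{j,m}) θ_j θ_m (v_ℓ* (M_j* M_m)^H v_ℓ)/(v_ℓ* v_ℓ) satisfies σ_min^UB² ≥ σ_min(M)². -/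
open Matrix

/-- Euclidean (ℓ²) norm of a complex vector. -/
noncomputable def vecNorm {n : ℕ} (v : Fin n → ℂ) : ℝ :=
  Real.sqrt (∑ i, ‖v i‖ ^ 2)

/-- Smallest singular value of a square complex matrix. -/
noncomputable def sigmaMin {n : ℕ} (M : Matrix (Fin n) (Fin n) ℂ) : ℝ :=
  ⨅ v : {v : Fin n → ℂ // vecNorm v = 1}, vecNorm (M.mulVec v.1)

/-- Hermitian part `N^H = (N + N*)/2` of a square complex matrix. -/
noncomputable def hermPart {n : ℕ} (N : Matrix (Fin n) (Fin n) ℂ) :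
    Matrix (Fin n) (Fin n) ℂ :=
  (2⁻¹ : ℂ) • (N + Nᴴ)

private lemma tri_sum {Q : ℕ} (f : Fin Q → Fin Q → ℝ) (hf : ∀ j m, f j m = f m j) :
    ∑ j, ∑ m ∈ Finset.Ici j, (if j = m then 1 else 2 : ℝ) * f j m
      = ∑ j, ∑ m, f j m := by
  have hIci : ∀ (j : Fin Q) (g : Fin Q → ℝ),
      ∑ m ∈ Finset.Ici j, g m = g j + ∑ m ∈ Finset.Ioi j, g m := by
    intro j g; rw [Finset.Ici_eq_cons_Ioi, Finset.sum_cons]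
  have hsplit : ∀ j : Fin Q, ∑ m ∈ Finset.Ici j, (if j = m then 1 else 2 : ℝ) * f j m
      = ∑ m ∈ Finset.Ici j, f j m + ∑ m ∈ Finset.Ioi j, f j m := by
    intro j
    rw [hIci j, hIci j (fun m => f j m), if_pos rfl, one_mul, add_assoc, ← two_mul]
    congr 1
    rw [Finset.mul_sum]
    refine Finset.sum_congr rfl fun m hm => ?_
    rw [if_neg (ne_of_lt (Finset.mem_Ioi.mp hm))]
  have hswap : ∑ j, ∑ m ∈ Finset.Ioi j, f j m = ∑ j, ∑ m ∈ Finset.Iio j, f j m := by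
    have e1 : ∀ j : Fin Q, ∑ m ∈ Finset.Ioi j, f j m = ∑ m, if j < m then f j m else 0 := by
      intro j
      rw [← Finset.sum_filter]
      refine Finset.sum_congr ?_ fun _ _ => rfl
      ext m; simp
    have e2 : ∀ m : Fin Q, ∑ j ∈ Finset.Iio m, f j m = ∑ j, if j < m then f j m else 0 := by
      intro m
      rw [← Finset.sum_filter]
      refine Finset.sum_congr ?_ fun _ _ => rfl
      ext j; simp
    rw [Finset.sum_congr rfl fun j _ => e1 j, Finset.sum_comm]
    refine Finset.sum_congr rfl fun m _ => ?_
    rw [← e2 m]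
    exact Finset.sum_congr rfl fun j _ => hf j m
  calc ∑ j, ∑ m ∈ Finset.Ici j, (if j = m then 1 else 2 : ℝ) * f j m
      = ∑ j, (∑ m ∈ Finset.Ici j, f j m + ∑ m ∈ Finset.Ioi j, f j m) :=
        Finset.sum_congr rfl fun j _ => hsplit j
    _ = (∑ j, ∑ m ∈ Finset.Ici j, f j m) + ∑ j, ∑ m ∈ Finset.Ioi j, f j m :=
        Finset.sum_add_distrib
    _ = (∑ j, ∑ m ∈ Finset.Ici j, f j m) + ∑ j, ∑ m ∈ Finset.Iio j, f j m := by rw [hswap]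
    _ = ∑ j, (∑ m ∈ Finset.Ici j, f j m + ∑ m ∈ Finset.Iio j, f j m) :=
        Finset.sum_add_distrib.symm
    _ = ∑ j, ∑ m, f j m := by
        refine Finset.sum_congr rfl fun j _ => ?_
        rw [← Finset.sum_union (by simp [Finset.disjoint_left])]
        refine Finset.sum_congr ?_ fun _ _ => rfl
        ext m
        simp only [Finset.mem_union, Finset.mem_Ici, Finset.mem_Iio, Finset.mem_univ, iff_true]
        exact le_or_gt j m

private lemma dot_self_re {n : ℕ} (w : Fin n → ℂ) : (star w ⬝ᵥ w).re = ∑ i, ‖w i‖ ^ 2 := by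
  simp [dotProduct, Complex.re_sum, Pi.star_apply, Complex.sq_norm,
    Complex.normSq_apply, Complex.mul_re]

private lemma dot_conjT {n : ℕ} (N : Matrix (Fin n) (Fin n) ℂ) (v : Fin n → ℂ) :
    star v ⬝ᵥ Nᴴ *ᵥ v = star (star v ⬝ᵥ N *ᵥ v) := by
  rw [mulVec_conjTranspose, dotProduct_star, star_star, dotProduct_mulVec]

private lemma herm_re {n : ℕ} (N : Matrix (Fin n) (Fin n) ℂ) (v : Fin n → ℂ) :
    (star v ⬝ᵥ (hermPart N) *ᵥ v).re = (star v ⬝ᵥ N *ᵥ v).re := by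
  rw [hermPart, smul_mulVec, dotProduct_smul, add_mulVec, dotProduct_add, dot_conjT]
  have : star v ⬝ᵥ N *ᵥ v + star (star v ⬝ᵥ N *ᵥ v)
      = ((2 : ℝ) * (star v ⬝ᵥ N *ᵥ v).re : ℂ) := by
    rw [Complex.star_def, Complex.add_conj]; push_cast; ring
  rw [this]
  simp [Complex.mul_re]

private lemma dot_sum {n : ℕ} {ι : Type*} (s : Finset ι) (u : Fin n → ℂ)
    (w : ι → Fin n → ℂ) : u ⬝ᵥ (∑ j ∈ s, w j) = ∑ j ∈ s, u ⬝ᵥ w j := by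
  simp only [dotProduct, Finset.sum_apply, Finset.mul_sum]
  exact Finset.sum_comm

private lemma key_sum {n Q : ℕ} (M : Fin Q → Matrix (Fin n) (Fin n) ℂ) (θ : Fin Q → ℝ)
    (v : Fin n → ℂ) :
    ∑ j : Fin Q, ∑ m ∈ Finset.Ici j,
        (if j = m then 1 else 2 : ℝ) * θ j * θ m *
          (star v ⬝ᵥ (hermPart ((M j)ᴴ * M m)).mulVec v).re
      = ∑ i, ‖((∑ j, (θ j : ℂ) • M j) *ᵥ v) i‖ ^ 2 := by
  set A := ∑ j, (θ j : ℂ) • M j with hA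
  set f : Fin Q → Fin Q → ℝ :=
    fun j m => θ j * θ m * (star v ⬝ᵥ ((M j)ᴴ * M m) *ᵥ v).re with hfdef
  have hsym : ∀ j m, f j m = f m j := by
    intro j m
    have : (M m)ᴴ * M j = ((M j)ᴴ * M m)ᴴ := by
      rw [conjTranspose_mul, conjTranspose_conjTranspose]
    simp only [hfdef, this, dot_conjT]
    rw [Complex.star_def, Complex.conj_re]
    ring
  have hterm : ∀ j m, (if j = m then 1 else 2 : ℝ) * θ j * θ m *
      (star v ⬝ᵥ (hermPart ((M j)ᴴ * M m)).mulVec v).re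
      = (if j = m then 1 else 2 : ℝ) * f j m := by
    intro j m
    rw [herm_re]
    simp only [hfdef]
    ring
  have h1 : ∑ j : Fin Q, ∑ m ∈ Finset.Ici j,
      (if j = m then 1 else 2 : ℝ) * θ j * θ m *
        (star v ⬝ᵥ (hermPart ((M j)ᴴ * M m)).mulVec v).re
      = ∑ j, ∑ m, f j m := by
    rw [← tri_sum f hsym]
    exact Finset.sum_congr rfl fun j _ => Finset.sum_congr rfl fun m _ => hterm j m
  rw [h1]
  have hAH : Aᴴ = ∑ j, (θ j : ℂ) • (M j)ᴴ := by
    rw [hA, conjTranspose_sum]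
    refine Finset.sum_congr rfl fun j _ => ?_
    rw [conjTranspose_smul, Complex.star_def, Complex.conj_ofReal]
  have hprod : Aᴴ * A = ∑ j, ∑ m, ((θ j : ℂ) * θ m) • ((M j)ᴴ * M m) := by
    rw [hAH, hA, Finset.sum_mul]
    refine Finset.sum_congr rfl fun j _ => ?_
    rw [Finset.mul_sum]
    refine Finset.sum_congr rfl fun m _ => ?_
    rw [smul_mul_assoc, mul_smul_comm, smul_smul]
  have hmv : (∑ j, ∑ m, ((θ j : ℂ) * θ m) • ((M j)ᴴ * M m)) *ᵥ v
      = ∑ j, ∑ m, (((θ j : ℂ) * θ m) • ((M j)ᴴ * M m)) *ᵥ v := by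
    exact (map_sum (mulVec.addMonoidHomLeft v) _ Finset.univ).trans
      (Finset.sum_congr rfl fun j _ => map_sum (mulVec.addMonoidHomLeft v) _ Finset.univ)
  have h2 : (star v ⬝ᵥ (Aᴴ * A) *ᵥ v).re = ∑ j, ∑ m, f j m := by
    rw [hprod, hmv, dot_sum, Complex.re_sum]
    refine Finset.sum_congr rfl fun j _ => ?_
    rw [dot_sum, Complex.re_sum]
    refine Finset.sum_congr rfl fun m _ => ?_
    rw [smul_mulVec, dotProduct_smul, hfdef]
    have : ((θ j : ℂ) * θ m) = ((θ j * θ m : ℝ) : ℂ) := by push_cast; ring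
    rw [this]
    simp [Complex.mul_re]
  rw [← h2]
  have h3 : star v ⬝ᵥ (Aᴴ * A) *ᵥ v = star (A *ᵥ v) ⬝ᵥ (A *ᵥ v) := by
    rw [← mulVec_mulVec, dotProduct_mulVec, ← star_mulVec]
  rw [h3, dot_self_re]

private lemma sigma_bound {n : ℕ} (A : Matrix (Fin n) (Fin n) ℂ) (v : Fin n → ℂ)
    (hv : v ≠ 0) :
    sigmaMin A ^ 2 ≤ (∑ i, ‖(A *ᵥ v) i‖ ^ 2) / ∑ i, ‖v i‖ ^ 2 := by
  have hspos : 0 < ∑ i, ‖v i‖ ^ 2 := by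
    obtain ⟨i, hi⟩ := Function.ne_iff.mp hv
    refine Finset.sum_pos' (fun i _ => by positivity) ⟨i, Finset.mem_univ i, ?_⟩
    have : ‖v i‖ ≠ 0 := by simpa using hi
    positivity
  set s : ℝ := ∑ i, ‖v i‖ ^ 2 with hs
  have hcsq : ((Real.sqrt s)⁻¹) ^ 2 = s⁻¹ := by
    rw [← Real.sqrt_inv, Real.sq_sqrt (by positivity)]
  have hnorm_smul : ∀ (w : Fin n → ℂ),
      ∑ i, ‖(((Real.sqrt s)⁻¹ : ℂ) • w) i‖ ^ 2 = ((Real.sqrt s)⁻¹) ^ 2 * ∑ i, ‖w i‖ ^ 2 := by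
    intro w
    rw [Finset.mul_sum]
    refine Finset.sum_congr rfl fun i _ => ?_
    have : ‖(((Real.sqrt s)⁻¹ : ℂ) • w) i‖ = |(Real.sqrt s)⁻¹| * ‖w i‖ := by
      simp [norm_mul, Complex.norm_real, abs_inv]
    rw [this, mul_pow, sq_abs]
  have hu1 : vecNorm (((Real.sqrt s)⁻¹ : ℂ) • v) = 1 := by
    rw [vecNorm, hnorm_smul, hcsq, ← hs, inv_mul_cancel₀ (ne_of_gt hspos), Real.sqrt_one]
  have hbdd : BddBelow (Set.range fun p : {w : Fin n → ℂ // vecNorm w = 1} =>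
      vecNorm (A.mulVec p.1)) := by
    refine ⟨0, ?_⟩
    rintro x ⟨p, rfl⟩
    exact Real.sqrt_nonneg _
  have h1 : sigmaMin A ≤ vecNorm (A *ᵥ (((Real.sqrt s)⁻¹ : ℂ) • v)) :=
    ciInf_le hbdd ⟨_, hu1⟩
  have h0 : 0 ≤ sigmaMin A := Real.iInf_nonneg fun p => Real.sqrt_nonneg _
  have h2 := pow_le_pow_left₀ h0 h1 2
  have h3 : vecNorm (A *ᵥ (((Real.sqrt s)⁻¹ : ℂ) • v)) ^ 2
      = ∑ i, ‖(A *ᵥ (((Real.sqrt s)⁻¹ : ℂ) • v)) i‖ ^ 2 := by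
    rw [vecNorm, Real.sq_sqrt (Finset.sum_nonneg fun i _ => sq_nonneg _)]
  have h4 : A *ᵥ (((Real.sqrt s)⁻¹ : ℂ) • v) = ((Real.sqrt s)⁻¹ : ℂ) • (A *ᵥ v) :=
    mulVec_smul _ _ _
  calc sigmaMin A ^ 2 ≤ vecNorm (A *ᵥ (((Real.sqrt s)⁻¹ : ℂ) • v)) ^ 2 := h2
    _ = ∑ i, ‖(A *ᵥ (((Real.sqrt s)⁻¹ : ℂ) • v)) i‖ ^ 2 := h3
    _ = ((Real.sqrt s)⁻¹) ^ 2 * ∑ i, ‖(A *ᵥ v) i‖ ^ 2 := by rw [h4, hnorm_smul]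
    _ = (∑ i, ‖(A *ᵥ v) i‖ ^ 2) / s := by rw [hcsq]; ring

/-- The SCM objective evaluated at the Rayleigh-quotient vector of any nonzero `v`
is an upper bound for `σ_min(M)²`; consequently the SCM upper bound, the minimum of
this quantity over a finite family of nonzero vectors, is also an upper bound. -/
theorem stmt6 {n Q : ℕ} (M : Fin Q → Matrix (Fin n) (Fin n) ℂ) (θ : Fin Q → ℝ) :
    (∀ v : Fin n → ℂ, v ≠ 0 →
      sigmaMin (∑ j, (θ j : ℂ) • M j) ^ 2 ≤
        ∑ j : Fin Q, ∑ m ∈ Finset.Ici j,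
          (if j = m then 1 else 2 : ℝ) * θ j * θ m *
            ((star v ⬝ᵥ (hermPart ((M j)ᴴ * M m)).mulVec v).re / ∑ i, ‖v i‖ ^ 2)) ∧
      ∀ (k : ℕ), 0 < k → ∀ vs : Fin k → (Fin n → ℂ), (∀ ℓ, vs ℓ ≠ 0) →
        sigmaMin (∑ j, (θ j : ℂ) • M j) ^ 2 ≤
          ⨅ ℓ : Fin k, ∑ j : Fin Q, ∑ m ∈ Finset.Ici j,
            (if j = m then 1 else 2 : ℝ) * θ j * θ m *
              ((star (vs ℓ) ⬝ᵥ (hermPart ((M j)ᴴ * M m)).mulVec (vs ℓ)).re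
                / ∑ i, ‖vs ℓ i‖ ^ 2) := by
  have main : ∀ v : Fin n → ℂ, v ≠ 0 →
      sigmaMin (∑ j, (θ j : ℂ) • M j) ^ 2 ≤
        ∑ j : Fin Q, ∑ m ∈ Finset.Ici j,
          (if j = m then 1 else 2 : ℝ) * θ j * θ m *
            ((star v ⬝ᵥ (hermPart ((M j)ᴴ * M m)).mulVec v).re / ∑ i, ‖v i‖ ^ 2) := by
    intro v hv
    have hrw : ∑ j : Fin Q, ∑ m ∈ Finset.Ici j,
        (if j = m then 1 else 2 : ℝ) * θ j * θ m *
          ((star v ⬝ᵥ (hermPart ((M j)ᴴ * M m)).mulVec v).re / ∑ i, ‖v i‖ ^ 2)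
        = (∑ j : Fin Q, ∑ m ∈ Finset.Ici j,
            (if j = m then 1 else 2 : ℝ) * θ j * θ m *
              (star v ⬝ᵥ (hermPart ((M j)ᴴ * M m)).mulVec v).re) / ∑ i, ‖v i‖ ^ 2 := by
      rw [Finset.sum_div]
      refine Finset.sum_congr rfl fun j _ => ?_
      rw [Finset.sum_div]
      exact Finset.sum_congr rfl fun m _ => (mul_div_assoc _ _ _).symm
    rw [hrw, key_sum]
    exact sigma_bound _ v hv
  refine ⟨main, fun k hk vs hvs => ?_⟩
  have : Nonempty (Fin k) := ⟨⟨0, hk⟩⟩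
  exact le_ciInf fun ℓ => main (vs ℓ) (hvs ℓ)
end

section
/- Let M, M̄ ∈ Matrix (Fin n) (Fin n) ℂ with M̄ invertible, and define β = inf_{v ∈ ℂⁿ, v ≠ 0} Re(v* M̄* M v) / ‖M̄ v‖₂². Then β · σ_min(M̄) ≤ σ_min(M), where σ_min denotes the smallest singular value. -/
open Matrix

/-- The NNSCM linearized stability factor
`β = inf_{v ≠ 0} Re(v* M̄* M v) / ‖M̄ v‖₂²`. -/
noncomputable def nnBeta {n : ℕ} (Mb M : Matrix (Fin n) (Fin n) ℂ) : ℝ :=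
  ⨅ v : {v : Fin n → ℂ // v ≠ 0},
    (star v.1 ⬝ᵥ (Mbᴴ * M).mulVec v.1).re / ∑ i, ‖Mb.mulVec v.1 i‖ ^ 2

lemma vecNorm_nonneg {n : ℕ} (v : Fin n → ℂ) : 0 ≤ vecNorm v := Real.sqrt_nonneg _

lemma sigmaMin_nonneg {n : ℕ} (M : Matrix (Fin n) (Fin n) ℂ) : 0 ≤ sigmaMin M :=
  Real.iInf_nonneg fun _ => vecNorm_nonneg _

lemma vecNorm_pos {n : ℕ} {v : Fin n → ℂ} (hv : v ≠ 0) : 0 < vecNorm v := by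
  rw [vecNorm]
  apply Real.sqrt_pos.mpr
  obtain ⟨i, hi⟩ := Function.ne_iff.mp hv
  exact Finset.sum_pos' (fun j _ => by positivity)
    ⟨i, Finset.mem_univ i, pow_pos (norm_pos_iff.mpr hi) 2⟩

lemma re_dot_le {n : ℕ} (a b : Fin n → ℂ) :
    (star a ⬝ᵥ b).re ≤ vecNorm a * vecNorm b := by
  have h : star a ⬝ᵥ b =
      inner ℂ ((WithLp.equiv 2 (Fin n → ℂ)).symm a) ((WithLp.equiv 2 (Fin n → ℂ)).symm b) := by
    simp [dotProduct, PiLp.inner_apply, RCLike.inner_apply, mul_comm]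
  have hna : vecNorm a = ‖(WithLp.equiv 2 (Fin n → ℂ)).symm a‖ := by
    rw [EuclideanSpace.norm_eq]; rfl
  have hnb : vecNorm b = ‖(WithLp.equiv 2 (Fin n → ℂ)).symm b‖ := by
    rw [EuclideanSpace.norm_eq]; rfl
  rw [h, hna, hnb]
  calc (inner ℂ ((WithLp.equiv 2 (Fin n → ℂ)).symm a) ((WithLp.equiv 2 (Fin n → ℂ)).symm b) : ℂ).re
      ≤ ‖(inner ℂ ((WithLp.equiv 2 (Fin n → ℂ)).symm a) ((WithLp.equiv 2 (Fin n → ℂ)).symm b) : ℂ)‖ :=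
        Complex.re_le_norm _
    _ ≤ _ := norm_inner_le_norm _ _

set_option maxHeartbeats 2000000 in
/-- The key NNSCM inequality: `β(M, M̄) · σ_min(M̄) ≤ σ_min(M)` for invertible `M̄`. -/
theorem stmt8 {n : ℕ} (M Mb : Matrix (Fin n) (Fin n) ℂ) (hMb : IsUnit Mb) :
    nnBeta Mb M * sigmaMin Mb ≤ sigmaMin M := by
  rcases Nat.eq_zero_or_pos n with hn | hn
  · subst hn
    haveI : IsEmpty {v : Fin 0 → ℂ // vecNorm v = 1} :=
      ⟨fun v => by have := v.2; simp [vecNorm] at this⟩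
    haveI : IsEmpty {v : Fin 0 → ℂ // v ≠ 0} :=
      ⟨fun v => v.2 (Subsingleton.elim _ _)⟩
    have h1 : sigmaMin M = 0 := Real.iInf_of_isEmpty _
    have h2 : sigmaMin Mb = 0 := Real.iInf_of_isEmpty _
    have h3 : nnBeta Mb M = 0 := Real.iInf_of_isEmpty _
    rw [h1, h2, h3, mul_zero]
  haveI : Nonempty {v : Fin n → ℂ // vecNorm v = 1} := by
    refine ⟨⟨Pi.single (⟨0, hn⟩ : Fin n) 1, ?_⟩⟩
    have key : ∀ j, ‖(Pi.single (⟨0, hn⟩ : Fin n) (1 : ℂ) : Fin n → ℂ) j‖ ^ 2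
        = if j = (⟨0, hn⟩ : Fin n) then 1 else 0 := by
      intro j
      rcases eq_or_ne j ⟨0, hn⟩ with h | h <;> simp [Pi.single_apply, h]
    rw [vecNorm, Finset.sum_congr rfl (fun j _ => key j)]
    simp
  rcases le_or_gt (nnBeta Mb M) 0 with hβ | hβ
  · exact le_trans (mul_nonpos_of_nonpos_of_nonneg hβ (sigmaMin_nonneg Mb)) (sigmaMin_nonneg M)
  · by_cases hbd : BddBelow (Set.range (fun v : {v : Fin n → ℂ // v ≠ 0} =>
        (star v.1 ⬝ᵥ (Mbᴴ * M).mulVec v.1).re / ∑ i, ‖Mb.mulVec v.1 i‖ ^ 2))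
    · apply le_ciInf
      intro v
      have hv0 : v.1 ≠ 0 := by
        intro h
        have := v.2
        rw [h] at this
        simp [vecNorm] at this
      have hinv : Mb⁻¹.mulVec (Mb.mulVec v.1) = v.1 := by
        rw [mulVec_mulVec, Matrix.nonsing_inv_mul _ ((Matrix.isUnit_iff_isUnit_det Mb).mp hMb),
          one_mulVec]
      have hMbv : Mb.mulVec v.1 ≠ 0 := by
        intro h
        rw [h] at hinv
        simp [Matrix.mulVec_zero] at hinv
        exact hv0 hinv.symm
      have hnorm : 0 < vecNorm (Mb.mulVec v.1) := vecNorm_pos hMbv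
      have hsumpos : 0 < ∑ i, ‖Mb.mulVec v.1 i‖ ^ 2 := by
        have := Real.sqrt_pos.mp hnorm
        exact this
      have hsum : (∑ i, ‖Mb.mulVec v.1 i‖ ^ 2) = vecNorm (Mb.mulVec v.1) ^ 2 :=
        (Real.sq_sqrt (by positivity)).symm
      have h1 : nnBeta Mb M ≤
          (star v.1 ⬝ᵥ (Mbᴴ * M).mulVec v.1).re / ∑ i, ‖Mb.mulVec v.1 i‖ ^ 2 :=
        ciInf_le hbd (⟨v.1, hv0⟩ : {v : Fin n → ℂ // v ≠ 0})
      have h2 : (star v.1 ⬝ᵥ (Mbᴴ * M).mulVec v.1).re ≤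
          vecNorm (Mb.mulVec v.1) * vecNorm (M.mulVec v.1) := by
        rw [← mulVec_mulVec, dotProduct_mulVec, ← star_mulVec]
        exact re_dot_le _ _
      have h3 : nnBeta Mb M * (∑ i, ‖Mb.mulVec v.1 i‖ ^ 2) ≤
          (star v.1 ⬝ᵥ (Mbᴴ * M).mulVec v.1).re := by
        exact (le_div_iff₀ hsumpos).mp h1
      have h4 : nnBeta Mb M * vecNorm (Mb.mulVec v.1) ≤ vecNorm (M.mulVec v.1) := by
        rw [hsum] at h3
        nlinarith [h3, h2, hnorm]
      have h5 : sigmaMin Mb ≤ vecNorm (Mb.mulVec v.1) :=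
        ciInf_le ⟨0, by rintro x ⟨w, rfl⟩; exact vecNorm_nonneg _⟩ v
      nlinarith [h4, h5, hβ.le]
    · exfalso
      have h0 : nnBeta Mb M = 0 := Real.iInf_of_not_bddBelow hbd
      linarith
end
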